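/- For every positive integer u and every natural number n, the (1,1) entry of the matrix (L_u R_1)^n L_u equals F_n(u) = Σ_{i=0}^{n} C(2n−i, i)·u^{n−i} and the (2,1) entry equals G_n(u) = Σ_{i=0}^{n} C(2n+1−i, i)·u^{n+1−i}. -/

import Mathlib

open Matrix Finset

def Lm (u : ℕ) : Matrix (Fin 2) (Fin 2) ℕ := !![1, 0; u, 1]
def Rm (v : ℕ) : Matrix (Fin 2) (Fin 2) ℕ := !![1, v; 0, 1]

/-- The product of the matrices corresponding to a word: `false ↦ L_u`, `true ↦ R_v`. -/
def wordProd (u v : ℕ) (w : List Bool) : Matrix (Fin 2) (Fin 2) ℕ :=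
  (w.map (fun b => if b then Rm v else Lm u)).prod

/-- μ of a matrix: maximum of the four entries. -/
def matMax (M : Matrix (Fin 2) (Fin 2) ℕ) : ℕ :=
  max (max (M 0 0) (M 0 1)) (max (M 1 0) (M 1 1))

/-- μ(𝒯^{(u,v)}(I₂;n)): maximum of μ over all products of exactly n matrices each L_u or R_v. -/
def levelMax (u v n : ℕ) : ℕ :=
  Finset.univ.sup (fun w : Fin n → Bool => matMax (wordProd u v (List.ofFn w)))

def Fs (u n : ℕ) : ℕ := ∑ i ∈ Finset.range (n + 1), (2 * n - i).choose i * u ^ (n - i)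
def Gs (u n : ℕ) : ℕ := ∑ i ∈ Finset.range (n + 1), (2 * n + 1 - i).choose i * u ^ (n + 1 - i)

lemma hF (u n : ℕ) : Fs u (n + 1) = Fs u n + Gs u n := by
  unfold Fs Gs
  rw [Finset.sum_range_succ' (fun i => (2 * (n+1) - i).choose i * u ^ (n + 1 - i)),
      Finset.sum_range_succ' (fun i => (2 * n + 1 - i).choose i * u ^ (n + 1 - i))]
  have h1 : ∀ k ∈ Finset.range (n+1),
      (2*(n+1) - (k+1)).choose (k+1) * u ^ (n+1-(k+1))
      = (2*n - k).choose k * u ^ (n-k) + (2*n - k).choose (k+1) * u ^ (n-k) := by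
    intro k hk
    simp only [Finset.mem_range] at hk
    have e1 : 2*(n+1) - (k+1) = (2*n - k) + 1 := by omega
    have e2 : n+1-(k+1) = n-k := by omega
    rw [e1, e2, Nat.choose_succ_succ, add_mul]
  rw [Finset.sum_congr rfl h1, Finset.sum_add_distrib]
  have h2 : ∑ k ∈ Finset.range (n+1), (2*n - k).choose (k+1) * u ^ (n-k)
      = ∑ k ∈ Finset.range n, (2*n + 1 - (k+1)).choose (k+1) * u ^ (n + 1 - (k+1)) := by
    rw [Finset.sum_range_succ]
    have : (2*n - n).choose (n+1) = 0 := Nat.choose_eq_zero_of_lt (by omega)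
    rw [this, zero_mul, add_zero]
    apply Finset.sum_congr rfl
    intro k hk; simp only [Finset.mem_range] at hk
    have e1 : 2*n - k = 2*n+1-(k+1) := by omega
    have e2 : n - k = n+1-(k+1) := by omega
    rw [e1, e2]
  rw [h2]
  simp
  ring

lemma hG (u n : ℕ) : Gs u (n + 1) = u * Fs u (n + 1) + Gs u n := by
  unfold Fs Gs
  rw [Finset.sum_range_succ' (fun i => (2 * (n+1) + 1 - i).choose i * u ^ (n + 1 + 1 - i)),
      Finset.mul_sum]
  have h1 : ∀ k ∈ Finset.range (n+1),
      (2*(n+1) + 1 - (k+1)).choose (k+1) * u ^ (n+1+1-(k+1))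
      = (2*n + 1 - k).choose k * u ^ (n+1-k) + (2*(n+1) - (k+1)).choose (k+1) * u ^ (n+1-k) := by
    intro k hk
    simp only [Finset.mem_range] at hk
    have e1 : 2*(n+1) + 1 - (k+1) = (2*(n+1) - (k+1)) + 1 := by omega
    have e2 : n+1+1-(k+1) = n+1-k := by omega
    have e3 : 2*(n+1) - (k+1) = 2*n+1-k := by omega
    rw [e1, e2, Nat.choose_succ_succ', add_mul, e3]
  rw [Finset.sum_congr rfl h1, Finset.sum_add_distrib]
  have h2 : ∑ i ∈ Finset.range (n+1+1), u * ((2*(n+1) - i).choose i * u ^ (n+1-i))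
      = ∑ k ∈ Finset.range (n+1), (2*(n+1)-(k+1)).choose (k+1) * u ^ (n+1-k) + u ^ (n+1+1) := by
    rw [Finset.sum_range_succ' (fun i => u * ((2*(n+1) - i).choose i * u ^ (n+1-i)))]
    congr 1
    · apply Finset.sum_congr rfl
      intro k hk; simp only [Finset.mem_range] at hk
      have e1 : n+1-(k+1) = n-k := by omega
      have e2 : n+1-k = (n-k)+1 := by omega
      rw [e1, e2, pow_succ]
      ring
    · simp [pow_succ]; ring
  rw [h2]
  simp
  ring

theorem stmt11 (u : ℕ) (hu : 1 ≤ u) (n : ℕ) :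
    ((Lm u * Rm 1) ^ n * Lm u) 0 0 =
      ∑ i ∈ Finset.range (n + 1), (2 * n - i).choose i * u ^ (n - i) ∧
    ((Lm u * Rm 1) ^ n * Lm u) 1 0 =
      ∑ i ∈ Finset.range (n + 1), (2 * n + 1 - i).choose i * u ^ (n + 1 - i) := by
  have key : ∀ m : ℕ, ((Lm u * Rm 1) ^ m * Lm u) 0 0 = Fs u m ∧
      ((Lm u * Rm 1) ^ m * Lm u) 1 0 = Gs u m := by
    intro m
    induction m with
    | zero => simp [Fs, Gs, Lm, Rm]
    | succ k ih =>
      obtain ⟨ha, hb⟩ := ih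
      have hLR : Lm u * Rm 1 = !![1, 1; u, u + 1] := by
        ext i j
        fin_cases i <;> fin_cases j <;>
          simp [Lm, Rm, Matrix.mul_apply, Fin.sum_univ_two]
      rw [pow_succ', mul_assoc]
      constructor
      · rw [Matrix.mul_apply, Fin.sum_univ_two, hLR]
        simp [Matrix.cons_val_zero, Matrix.cons_val_one]
        rw [← hLR, ha, hb, hF]
      · rw [Matrix.mul_apply, Fin.sum_univ_two, hLR]
        simp [Matrix.cons_val_zero, Matrix.cons_val_one]
        rw [← hLR, ha, hb, hG, hF]
        ring
  exact key n
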